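/- Let S be a square skew left brace and fix a projection e of S. Then for every a ∈ S: (e·a·e)·(e·a·e)* = e, (e·a·e)*·(e·a·e) = e (so e·a·e ∈ H = {h ∈ S | h·h* = e and h*·h = e}), and (a·a*)·(e·a·e)·(a*·a) = a. -/
import Mathlib


/-- A dual weak left ⋆-brace: `(S,+,-)` and `(S,·,⋆)` are regular ⋆-semigroups,
and `x·(y+z) = x·y + (-x) + x·z`, `(-x)+x = x·x⋆`, `x+(-x) = x⋆·x` hold. -/
class DWLSB (S : Type*) extends Add S, Mul S, Neg S, Star S where
  add_assoc' : ∀ x y z : S, x + y + z = x + (y + z)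
  neg_reg : ∀ x : S, x + -x + x = x
  neg_neg' : ∀ x : S, -(-x) = x
  neg_add' : ∀ x y : S, -(x + y) = -y + -x
  mul_assoc' : ∀ x y z : S, x * y * z = x * (y * z)
  star_reg : ∀ x : S, x * star x * x = x
  star_star' : ∀ x : S, star (star x) = x
  star_mul' : ∀ x y : S, star (x * y) = star y * star x
  distrib' : ∀ x y z : S, x * (y + z) = x * y + -x + x * z
  neg_add_self' : ∀ x : S, -x + x = x * star x
  add_neg_self' : ∀ x : S, x + -x = star x * x

/-- The set of right distributors of a dual weak left ⋆-brace. -/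
def Dr (S : Type*) [DWLSB S] : Set S :=
  {z | ∀ a b : S, (a + b) * z = a * z + -z + b * z}

/-- `r : S×S → S×S` is a set-theoretic solution of the Yang–Baxter equation:
`(r×id)∘(id×r)∘(r×id) = (id×r)∘(r×id)∘(id×r)`. -/
def IsYBESolution {S : Type*} (r : S × S → S × S) : Prop :=
  (fun p : S × S × S => ((r (p.1, p.2.1)).1, (r (p.1, p.2.1)).2, p.2.2)) ∘
      (fun p : S × S × S => (p.1, r (p.2.1, p.2.2))) ∘
      (fun p : S × S × S => ((r (p.1, p.2.1)).1, (r (p.1, p.2.1)).2, p.2.2)) =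
    (fun p : S × S × S => (p.1, r (p.2.1, p.2.2))) ∘
      (fun p : S × S × S => ((r (p.1, p.2.1)).1, (r (p.1, p.2.1)).2, p.2.2)) ∘
      (fun p : S × S × S => (p.1, r (p.2.1, p.2.2)))

/-- A square skew left brace: a dual weak left ⋆-brace with `x·x⋆ = x·y·y⋆·x⋆`,
i.e. `(S,·,⋆)` is completely simple. -/
class SSLB (S : Type*) extends DWLSB S where
  square : ∀ x y : S, x * star x = x * y * star y * star x


instance (priority := low) sslbSemigroup {T : Type*} [SSLB T] : Semigroup T := ⟨DWLSB.mul_assoc'⟩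

section Aux
variable {S : Type*} [SSLB S]

private lemma sslb_assoc : ∀ x y z : S, x * y * z = x * (y * z) := DWLSB.mul_assoc'



private lemma key (e : S) (h1 : e * e = e) (h2 : star e = e) (a : S) :
    e * a * e * star a * e = e := by
  have L2 : e * a * star a * e = e := by
    have hs := SSLB.square e a
    rw [h2, h1] at hs
    exact hs.symm
  have hs2 := SSLB.square (e * a) e
  rw [DWLSB.star_mul', h2] at hs2
  rw [mul_assoc (e * a) e e, h1] at hs2
  rw [mul_assoc (e * a * e) (star a) e, ← hs2, ← mul_assoc]
  exact L2

private lemma aea (e : S) (h1 : e * e = e) (h2 : star e = e) (a : S) :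
    star a * a = star a * e * a := by
  have hs := SSLB.square (star a) e
  rw [h2, DWLSB.star_star', mul_assoc (star a) e e, h1] at hs
  exact hs

end Aux

theorem stmt19 {S : Type*} [SSLB S] (e : S) (he : e * e = e ∧ star e = e) :
    ∀ a : S,
      (e * a * e) * star (e * a * e) = e ∧
      star (e * a * e) * (e * a * e) = e ∧
      a * star a * (e * a * e) * (star a * a) = a := by
  obtain ⟨h1, h2⟩ := he
  intro a
  have k := key e h1 h2 a
  have k2 := key e h1 h2 (star a)
  rw [DWLSB.star_star'] at k2
  refine ⟨?_, ?_, ?_⟩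
  · rw [DWLSB.star_mul', DWLSB.star_mul', h2]
    simp only [← mul_assoc]
    rw [mul_assoc (e * a) e e, h1]
    exact k
  · rw [DWLSB.star_mul', DWLSB.star_mul', h2]
    simp only [← mul_assoc]
    rw [mul_assoc (e * star a) e e, h1]
    exact k2
  · have ha := aea e h1 h2 a
    calc a * star a * (e * a * e) * (star a * a)
        = a * star a * (e * a * e * star a * e) * a := by
          rw [ha]; simp only [mul_assoc]
      _ = a * (star a * e * a) := by rw [k]; simp only [mul_assoc]
      _ = a * (star a * a) := by rw [← ha]
      _ = a := by rw [← mul_assoc, DWLSB.star_reg]
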